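/- Let U ⊆ E be open and X : E → E a vector field that is C² on U and divergence free on U (div X = 0 on U). Then for every p ∈ U, div(∇_X X)(p) = ½ |L_X g|²(p) − |∇X|²(p), where ∇_X X is the vector field p ↦ fderiv ℝ X p (X(p)), |∇X|²(p) = Σᵢⱼ (∂ᵢXⱼ(p))², and |L_X g|²(p) = Σᵢⱼ (∂ᵢXⱼ(p) + ∂ⱼXᵢ(p))². (This is the Bochner formula (3.5) of the paper, div(∇_X X) = Ric(X,X) + ½|L_X g|² − |∇X|², specialized to the flat Euclidean case where Ric = 0.) -/

import Mathlib

open RealInnerProductSpace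

noncomputable section

/-- The flat Euclidean three-space. -/
abbrev E3 : Type := EuclideanSpace ℝ (Fin 3)

/-- The standard orthonormal basis of `E3`. -/
def sb (i : Fin 3) : E3 := EuclideanSpace.single i (1 : ℝ)

/-- `pd X i j p` is `∂ᵢXⱼ(p)`, the `j`-th component of `fderiv ℝ X p (sb i)`. -/
def pd (X : E3 → E3) (i j : Fin 3) (p : E3) : ℝ := fderiv ℝ X p (sb i) j

/-- The divergence of a vector field on `E3`. -/
def vdiv (X : E3 → E3) (p : E3) : ℝ := pd X 0 0 p + pd X 1 1 p + pd X 2 2 p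

/-- Interpret a triple of reals as a point of `E3`. -/
def toE3 (v : Fin 3 → ℝ) : E3 := (WithLp.equiv 2 (Fin 3 → ℝ)).symm v

/-- The curl of a vector field on `E3`. -/
def vcurl (X : E3 → E3) (p : E3) : E3 :=
  toE3 ![pd X 1 2 p - pd X 2 1 p, pd X 2 0 p - pd X 0 2 p, pd X 0 1 p - pd X 1 0 p]

/-- The cross product on `E3`. -/
def cross3 (u v : E3) : E3 :=
  toE3 ![u 1 * v 2 - u 2 * v 1, u 2 * v 0 - u 0 * v 2, u 0 * v 1 - u 1 * v 0]

/-- The componentwise Laplacian of a vector field on `E3`. -/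
def vlap (X : E3 → E3) (p : E3) : E3 :=
  toE3 (fun j => ∑ i : Fin 3, fderiv ℝ (fun q => fderiv ℝ X q (sb i) j) p (sb i))


lemma sum_smul_sb (v : E3) : ∑ j : Fin 3, v j • sb j = v := by
  ext k
  simp [sb, Fin.sum_univ_three, EuclideanSpace.single_apply]
  fin_cases k <;> simp

lemma clm_expand (A : E3 →L[ℝ] E3) (v : E3) (k : Fin 3) :
    A v k = ∑ j : Fin 3, v j * A (sb j) k := by
  conv_lhs => rw [← sum_smul_sb v]
  rw [map_sum]
  simp [Fin.sum_univ_three]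

/-- Evaluation of a CLM at `sb i`, component `j`, as a continuous linear map. -/
def Lij (i j : Fin 3) : (E3 →L[ℝ] E3) →L[ℝ] ℝ :=
  (EuclideanSpace.proj j).comp (ContinuousLinearMap.apply ℝ E3 (sb i))

/-- Bochner formula (3.5) for a divergence-free `C²` field, flat Euclidean case
(`Ric = 0`): `div (∇_X X) = ½ |L_X g|² - |∇X|²`. -/
theorem bochner_formula (U : Set E3) (hU : IsOpen U) (X : E3 → E3)
    (hX : ContDiffOn ℝ 2 X U) (hdiv : ∀ p ∈ U, vdiv X p = 0) :
    ∀ p ∈ U, vdiv (fun q => fderiv ℝ X q (X q)) p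
      = (1 / 2) * (∑ i : Fin 3, ∑ j : Fin 3, (pd X i j p + pd X j i p) ^ 2)
        - ∑ i : Fin 3, ∑ j : Fin 3, (pd X i j p) ^ 2 := by
  intro p hp
  have hp' : U ∈ nhds p := hU.mem_nhds hp
  have hX2 : ContDiffAt ℝ 2 X p := hX.contDiffAt hp'
  have hD : DifferentiableAt ℝ (fderiv ℝ X) p := by
    have h1 : ContDiffAt ℝ 1 (fderiv ℝ X) p := hX2.fderiv_right (by norm_num)
    exact h1.differentiableAt one_ne_zero
  have hXd : DifferentiableAt ℝ X p := hX2.differentiableAt two_ne_zero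
  set D := fderiv ℝ X with hDdef
  set f'' := fderiv ℝ (fderiv ℝ X) p with hf''
  have hsymm : ∀ v w, f'' v w = f'' w v := hX2.isSymmSndFDerivAt (by simp)
  -- derivative of pd X i j
  have hpd : ∀ (i j : Fin 3) (u : E3),
      fderiv ℝ (fun q => pd X i j q) p u = f'' u (sb i) j := by
    intro i j u
    have h : HasFDerivAt (fun q => Lij i j (fderiv ℝ X q))
        ((Lij i j).comp f'') p := (Lij i j).hasFDerivAt.comp p hD.hasFDerivAt
    have : fderiv ℝ (fun q => pd X i j q) p = (Lij i j).comp f'' := h.fderiv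
    rw [this]
    rfl
  -- derivative of vdiv X is 0
  have hvd0 : fderiv ℝ (vdiv X) p = 0 := by
    have h0 : vdiv X =ᶠ[nhds p] fun _ => (0 : ℝ) :=
      Filter.eventuallyEq_of_mem hp' hdiv
    rw [h0.fderiv_eq, fderiv_fun_const]
    rfl
  -- differentiability of each pd
  have hpdd : ∀ (i j : Fin 3), DifferentiableAt ℝ (fun q => pd X i j q) p := by
    intro i j
    exact ((Lij i j).hasFDerivAt.comp p hD.hasFDerivAt).differentiableAt
  -- sum of second derivatives vanishes
  have hsum0 : ∀ u : E3, ∑ i : Fin 3, f'' u (sb i) i = 0 := by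
    intro u
    have : fderiv ℝ (vdiv X) p u
        = f'' u (sb 0) 0 + f'' u (sb 1) 1 + f'' u (sb 2) 2 := by
      have : vdiv X = fun q => pd X 0 0 q + pd X 1 1 q + pd X 2 2 q := rfl
      rw [this, fderiv_fun_add (((hpdd 0 0).fun_add (hpdd 1 1))) (hpdd 2 2),
        fderiv_fun_add (hpdd 0 0) (hpdd 1 1)]
      simp [hpd]
    rw [Fin.sum_univ_three, ← this, hvd0]
    rfl
  -- main derivative computation
  have hmain : fderiv ℝ (fun q => fderiv ℝ X q (X q)) p
      = (D p).comp (D p) + f''.flip (X p) := fderiv_clm_apply hD hXd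
  have hcomp : ∀ i : Fin 3, pd (fun q => fderiv ℝ X q (X q)) i i p
      = (D p) ((D p) (sb i)) i + f'' (sb i) (X p) i := by
    intro i
    unfold pd
    rw [hmain]
    rfl
  have key : vdiv (fun q => fderiv ℝ X q (X q)) p
      = ∑ i : Fin 3, ∑ j : Fin 3, pd X i j p * pd X j i p := by
    have e1 : ∀ i : Fin 3, (D p) ((D p) (sb i)) i = ∑ j : Fin 3, pd X i j p * pd X j i p := by
      intro i
      rw [clm_expand (D p) ((D p) (sb i)) i]
      rfl
    have e2 : ∑ i : Fin 3, f'' (sb i) (X p) i = 0 := by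
      have : ∀ i : Fin 3, f'' (sb i) (X p) i = ∑ j : Fin 3, X p j * f'' (sb j) (sb i) i := by
        intro i
        rw [clm_expand (f'' (sb i)) (X p) i]
        congr 1
        funext j
        rw [hsymm (sb i) (sb j)]
      rw [Finset.sum_congr rfl fun i _ => this i, Finset.sum_comm]
      simp only [← Finset.mul_sum]
      rw [Finset.sum_congr rfl fun j _ => by rw [hsum0 (sb j), mul_zero]]
      simp
    have : vdiv (fun q => fderiv ℝ X q (X q)) p
        = (∑ i : Fin 3, (D p) ((D p) (sb i)) i) + ∑ i : Fin 3, f'' (sb i) (X p) i := by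
      unfold vdiv
      rw [hcomp 0, hcomp 1, hcomp 2, Fin.sum_univ_three, Fin.sum_univ_three]
      ring
    rw [this, e2, add_zero]
    exact Finset.sum_congr rfl fun i _ => e1 i
  rw [key]
  simp only [Fin.sum_univ_three]
  ring
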